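/- If t is a simply typed λ-term all of whose redexes have degree at most d ≥ 1, then all redexes of its parallel reduct t* have degree at most d − 1. -/

import Mathlib

/-- Simple types over a single base type `o`. -/
inductive Ty : Type
  | o : Ty
  | arr : Ty → Ty → Ty
deriving DecidableEq

/-- Degree of a simple type: the height of its syntax tree. -/
def Ty.deg : Ty → Nat
  | .o => 0
  | .arr a b => max a.deg b.deg + 1

/-- Church-style simply typed λ-terms (de Bruijn indices, annotated λ). -/
inductive CTm : Type
  | var : Nat → CTm
  | lam : Ty → CTm → CTm
  | app : CTm → CTm → CTm
deriving DecidableEq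

namespace CTm

def lift (d : Nat) : Nat → CTm → CTm
  | k, var n => if n < k then var n else var (n + d)
  | k, lam A t => lam A (lift d (k + 1) t)
  | k, app t u => app (lift d k t) (lift d k u)

def subst : CTm → Nat → CTm → CTm
  | var n, k, u => if n = k then lift k 0 u else if k < n then var (n - 1) else var n
  | lam A t, k, u => lam A (subst t (k + 1) u)
  | app a b, k, u => app (subst a k u) (subst b k u)

/-- Full parallel reduction `t*`. -/
def pstar : CTm → CTm
  | var n => var n
  | lam A t => lam A (pstar t)
  | app (lam _ t) u => subst (pstar t) 0 (pstar u)
  | app (var n) u => app (var n) (pstar u)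
  | app (app a b) u => app (pstar (app a b)) (pstar u)

/-- Type of a term in a context (de Bruijn): `some A` iff well-typed of type `A`. -/
def typeof : List Ty → CTm → Option Ty
  | Γ, var n => Γ[n]?
  | Γ, lam A t => (typeof (A :: Γ) t).map (Ty.arr A)
  | Γ, app t u =>
    match typeof Γ t, typeof Γ u with
    | some (.arr A B), some A' => if A = A' then some B else none
    | _, _ => none

/-- All redexes of `t` (in context `Γ`) have degree at most `d`.
The degree of a redex `(λx^A.t) u` with `t : B` is `deg (A → B)`. -/
def RedexBound (d : Nat) : List Ty → CTm → Prop
  | _, var _ => True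
  | Γ, lam A t => RedexBound d (A :: Γ) t
  | Γ, app (lam A t) u =>
      (∀ B, typeof (A :: Γ) t = some B → (Ty.arr A B).deg ≤ d) ∧
        RedexBound d (A :: Γ) t ∧ RedexBound d Γ u
  | Γ, app (var n) u => RedexBound d Γ (var n) ∧ RedexBound d Γ u
  | Γ, app (app a b) u => RedexBound d Γ (app a b) ∧ RedexBound d Γ u

/-- β-normal: contains no redex. -/
def Normal : CTm → Prop
  | var _ => True
  | lam _ t => Normal t
  | app t u => (∀ A t', t ≠ lam A t') ∧ Normal t ∧ Normal u

/-- Single-step β-reduction. -/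
inductive Step : CTm → CTm → Prop
  | beta (A : Ty) (t u : CTm) : Step (app (lam A t) u) (subst t 0 u)
  | appL {t t' : CTm} (u : CTm) : Step t t' → Step (app t u) (app t' u)
  | appR (t : CTm) {u u' : CTm} : Step u u' → Step (app t u) (app t u')
  | lam (A : Ty) {t t' : CTm} : Step t t' → Step (lam A t) (lam A t')

/-- β-convertibility. -/
def Conv : CTm → CTm → Prop := Relation.EqvGen Step

lemma typeof_lift (Δ₀ Δ Γ : List Ty) (u : CTm) :
    typeof (Δ₀ ++ (Δ ++ Γ)) (lift Δ.length Δ₀.length u) = typeof (Δ₀ ++ Γ) u := by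
  induction u generalizing Δ₀ with
  | var n =>
    simp only [lift, typeof]
    split
    · next h =>
      rw [typeof, List.getElem?_append_left h, List.getElem?_append_left h]
    · next h =>
      push_neg at h
      rw [typeof, List.getElem?_append_right (by omega), List.getElem?_append_right (by omega),
          List.getElem?_append_right h]
      congr 1
      omega
  | lam A t ih =>
    simp only [lift, typeof]
    rw [show A :: (Δ₀ ++ (Δ ++ Γ)) = (A :: Δ₀) ++ (Δ ++ Γ) from rfl,
        show Δ₀.length + 1 = (A :: Δ₀).length from rfl, ih (A :: Δ₀)]
    rfl
  | app a b iha ihb =>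
    simp only [lift, typeof, iha, ihb]

lemma typeof_subst (Δ Γ : List Ty) (A : Ty) (u t : CTm) (hu : typeof Γ u = some A) :
    typeof (Δ ++ Γ) (subst t Δ.length u) = typeof (Δ ++ A :: Γ) t := by
  induction t generalizing Δ with
  | var n =>
    simp only [subst]
    split
    · next h =>
      subst h
      have := typeof_lift [] Δ Γ u
      simp only [List.nil_append, List.length_nil] at this
      rw [this, hu, typeof, List.getElem?_append_right (le_refl _)]
      simp
    · split
      · next h1 h2 =>
        rw [typeof, typeof, List.getElem?_append_right (by omega),
            List.getElem?_append_right (by omega)]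
        rw [show n - Δ.length = (n - Δ.length - 1) + 1 by omega]
        simp only [List.getElem?_cons_succ]
        congr 1
        omega
      · next h1 h2 =>
        rw [typeof, typeof, List.getElem?_append_left (by omega), List.getElem?_append_left (by omega)]
  | lam B t ih =>
    simp only [subst, typeof]
    rw [show B :: (Δ ++ Γ) = (B :: Δ) ++ Γ from rfl,
        show Δ.length + 1 = (B :: Δ).length from rfl, ih (B :: Δ)]
    rfl
  | app a b iha ihb =>
    simp only [subst, typeof, iha, ihb]


lemma typeof_app_inv {Γ : List Ty} {t u : CTm} {A : Ty}
    (h : typeof Γ (app t u) = some A) :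
    ∃ X, typeof Γ t = some (Ty.arr X A) ∧ typeof Γ u = some X := by
  rw [typeof] at h
  rcases h1 : typeof Γ t with _ | C <;> rw [h1] at h <;> [exact absurd h (by simp); skip]
  rcases C with _ | ⟨X, Y⟩
  · exact absurd h (by simp)
  rcases h2 : typeof Γ u with _ | A' <;> rw [h2] at h <;> [exact absurd h (by simp); skip]
  simp only at h
  split at h
  · next heq => cases h; subst heq; exact ⟨X, rfl, rfl⟩
  · exact absurd h (by simp)

lemma typeof_app_intro {Γ : List Ty} {t u : CTm} {A X : Ty}
    (h1 : typeof Γ t = some (Ty.arr X A)) (h2 : typeof Γ u = some X) :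
    typeof Γ (app t u) = some A := by
  rw [typeof, h1, h2]
  simp

lemma typeof_lam_inv {Γ : List Ty} {B : Ty} {t : CTm} {C : Ty}
    (h : typeof Γ (lam B t) = some C) :
    ∃ D, typeof (B :: Γ) t = some D ∧ C = Ty.arr B D := by
  rw [typeof] at h
  rcases h1 : typeof (B :: Γ) t with _ | D <;> rw [h1] at h <;> [exact absurd h (by simp); skip]
  simp only [Option.map_some] at h
  cases h
  exact ⟨D, rfl, rfl⟩

lemma typeof_pstar (Γ : List Ty) (t : CTm) (A : Ty) (ht : typeof Γ t = some A) :
    typeof Γ (pstar t) = some A := by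
  induction t using pstar.induct generalizing Γ A with
  | case1 n => exact ht
  | case2 B t ih =>
    simp only [typeof, Option.map_eq_some_iff] at ht ⊢
    obtain ⟨C, hC, rfl⟩ := ht
    simp only [pstar, typeof, ih _ _ hC, Option.map_some]
  | case3 B t u iht ihu =>
    obtain ⟨X, h1, h2⟩ := typeof_app_inv ht
    obtain ⟨D, hD, hDe⟩ := typeof_lam_inv h1
    injection hDe with e1 e2
    subst e1; subst e2
    simp only [pstar]
    have := typeof_subst [] Γ X (pstar u) (pstar t) (ihu _ _ h2)
    simp only [List.nil_append, List.length_nil] at this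
    rw [this]
    exact iht _ _ hD
  | case4 n u ihu =>
    obtain ⟨X, h1, h2⟩ := typeof_app_inv ht
    exact typeof_app_intro h1 (ihu _ _ h2)
  | case5 a b u ihab ihu =>
    obtain ⟨X, h1, h2⟩ := typeof_app_inv ht
    exact typeof_app_intro (ihab _ _ h1) (ihu _ _ h2)

lemma rb_app_left {e : Nat} {Γ : List Ty} {t u : CTm}
    (h : RedexBound e Γ (app t u)) : RedexBound e Γ t := by
  cases t with
  | var n => trivial
  | lam A s => exact h.2.1
  | app a b => exact h.1

lemma rb_app_right {e : Nat} {Γ : List Ty} {t u : CTm}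
    (h : RedexBound e Γ (app t u)) : RedexBound e Γ u := by
  cases t with
  | var n => exact h.2
  | lam A s => exact h.2.2
  | app a b => exact h.2

lemma rb_app_intro {e : Nat} {Γ : List Ty} {t u : CTm}
    (ht : RedexBound e Γ t) (hu : RedexBound e Γ u)
    (hl : ∀ A s, t = lam A s → ∀ B, typeof (A :: Γ) s = some B → (Ty.arr A B).deg ≤ e) :
    RedexBound e Γ (app t u) := by
  cases t with
  | var n => exact ⟨trivial, hu⟩
  | lam A s => exact ⟨hl A s rfl, ht, hu⟩
  | app a b => exact ⟨ht, hu⟩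

lemma redexBound_lift (e : Nat) (Δ₀ Δ Γ : List Ty) (u : CTm)
    (h : RedexBound e (Δ₀ ++ Γ) u) :
    RedexBound e (Δ₀ ++ (Δ ++ Γ)) (lift Δ.length Δ₀.length u) := by
  induction u generalizing Δ₀ with
  | var n =>
    simp only [lift]
    split <;> trivial
  | lam A t ih =>
    simp only [lift]
    exact ih (A :: Δ₀) h
  | app a b iha ihb =>
    simp only [lift]
    refine rb_app_intro (iha Δ₀ (rb_app_left h)) (ihb Δ₀ (rb_app_right h)) ?_
    intro A s hEq B hB
    cases a with
    | var n => simp only [lift] at hEq; split at hEq <;> cases hEq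
    | app _ _ => cases hEq
    | lam A' w =>
      simp only [lift] at hEq
      cases hEq
      refine h.1 B ?_
      rw [show A :: (Δ₀ ++ Γ) = (A :: Δ₀) ++ Γ from rfl,
          ← typeof_lift (A :: Δ₀) Δ Γ w]
      exact hB

lemma redexBound_subst (e : Nat) (Δ Γ : List Ty) (A : Ty) (u t : CTm)
    (hu : typeof Γ u = some A) (hA : A.deg ≤ e)
    (hru : RedexBound e Γ u) (ht : RedexBound e (Δ ++ A :: Γ) t) :
    RedexBound e (Δ ++ Γ) (subst t Δ.length u) := by
  induction t generalizing Δ with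
  | var n =>
    simp only [subst]
    split
    · exact redexBound_lift e [] Δ Γ u hru
    · split <;> trivial
  | lam B t ih =>
    simp only [subst]
    exact ih (B :: Δ) ht
  | app a b iha ihb =>
    simp only [subst]
    refine rb_app_intro (iha Δ (rb_app_left ht)) (ihb Δ (rb_app_right ht)) ?_
    intro A' s hEq B hB
    cases a with
    | app _ _ => cases hEq
    | lam A'' w =>
      simp only [subst] at hEq
      cases hEq
      refine ht.1 B ?_
      rw [show A' :: (Δ ++ A :: Γ) = (A' :: Δ) ++ A :: Γ from rfl,
          ← typeof_subst (A' :: Δ) Γ A u w hu]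
      exact hB
    | var n =>
      simp only [subst] at hEq
      split at hEq
      · next hn =>
        cases u with
        | var m => simp only [lift] at hEq; split at hEq <;> cases hEq
        | app _ _ => cases hEq
        | lam A₁ w =>
          simp only [lift] at hEq
          cases hEq
          obtain ⟨C, hC, hCe⟩ := typeof_lam_inv hu
          have hl := typeof_lift [A'] Δ Γ w
          simp only [List.singleton_append, List.length_singleton] at hl
          simp only [Nat.zero_add] at hB
          rw [hl, hC] at hB
          cases hB
          rw [hCe] at hA
          exact hA
      · split at hEq <;> cases hEq

theorem redexBound_pstar' {Γ : List Ty} {t : CTm} {A : Ty} {d : Nat}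
    (hd : 1 ≤ d) (ht : CTm.typeof Γ t = some A) (hb : CTm.RedexBound d Γ t) :
    CTm.RedexBound (d - 1) Γ (CTm.pstar t) := by
  induction t using pstar.induct generalizing Γ A with
  | case1 n => trivial
  | case2 B t ih =>
    obtain ⟨D, hD, _⟩ := typeof_lam_inv ht
    exact ih hD hb
  | case3 B t u iht ihu =>
    obtain ⟨X, h1, h2⟩ := typeof_app_inv ht
    obtain ⟨D, hD, hDe⟩ := typeof_lam_inv h1
    injection hDe with e1 e2
    subst e1; subst e2
    simp only [pstar]
    have hdeg : X.deg ≤ d - 1 := by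
      have := hb.1 A hD
      simp only [Ty.deg] at this
      omega
    have := redexBound_subst (d - 1) [] Γ X (pstar u) (pstar t)
      (typeof_pstar Γ u X h2) hdeg (ihu h2 hb.2.2) (iht hD hb.2.1)
    simpa using this
  | case4 n u ihu =>
    obtain ⟨X, h1, h2⟩ := typeof_app_inv ht
    exact ⟨trivial, ihu h2 hb.2⟩
  | case5 a b u ihab ihu =>
    obtain ⟨X, h1, h2⟩ := typeof_app_inv ht
    simp only [pstar]
    refine rb_app_intro (ihab h1 hb.1) (ihu h2 hb.2) ?_
    intro A' s hEq B hB
    have hty : typeof Γ (lam A' s) = some (Ty.arr X A) := by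
      rw [← hEq]; exact typeof_pstar Γ (app a b) _ h1
    obtain ⟨C, hC, hCe⟩ := typeof_lam_inv hty
    injection hCe with e1 e2
    subst e1; subst e2
    rw [hC] at hB
    cases hB
    cases a with
    | var m => simp only [pstar] at hEq; cases hEq
    | app _ _ => simp only [pstar] at hEq; cases hEq
    | lam A₃ c =>
      obtain ⟨Y, g1, g2⟩ := typeof_app_inv h1
      obtain ⟨D, hD, hDe⟩ := typeof_lam_inv g1
      injection hDe with f1 f2
      subst f1; subst f2
      have := hb.1.1 _ hD
      simp only [Ty.deg] at this ⊢
      omega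

end CTm

/-- if all redexes of a simply typed term `t` have degree at most
`d ≥ 1`, then all redexes of `t*` have degree at most `d - 1`. -/
theorem redexBound_pstar {Γ : List Ty} {t : CTm} {A : Ty} {d : Nat}
    (hd : 1 ≤ d) (ht : CTm.typeof Γ t = some A) (hb : CTm.RedexBound d Γ t) :
    CTm.RedexBound (d - 1) Γ (CTm.pstar t) :=
  CTm.redexBound_pstar' hd ht hb
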